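/- Let G be a finite simple graph with minimum degree at least 6, let S be a subset of V(G), let x₁, x₂ be two vertices of S, and let F be a connected component of G∖S isomorphic to the complete graph K₅ with vertex set {v₀, v₁, v₂, v₃, v₄}. If every neighbor in S of each of v₁, v₂, v₃, v₄ lies in {x₁, x₂}, then G contains a subgraph isomorphic to K₇ minus a triangle (the complete graph on 7 vertices with the three edges of one triangle deleted). -/

import Mathlib

open SimpleGraph

/-- The complete graph `K₇` with the three edges of one triangle (on the first three
vertices) deleted. -/
def K7minusTriangle : SimpleGraph (Fin 7) :=
  SimpleGraph.fromRel (fun i j => ¬(i.val < 3 ∧ j.val < 3))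

/-- Let `G` be a finite simple graph with minimum degree at least 6, `S ⊆ V(G)`,
`x₁, x₂ ∈ S`, and let `F` be a connected component of `G ∖ S` isomorphic to `K₅` with vertex
set `{v₀, v₁, v₂, v₃, v₄}`. If every neighbor in `S` of each of `v₁, v₂, v₃, v₄` lies in
`{x₁, x₂}`, then `G` contains a subgraph isomorphic to `K₇` minus a triangle. -/
theorem stmt_13 {V : Type*} [Fintype V] (G : SimpleGraph V) [DecidableRel G.Adj]
    (hδ : ∀ v : V, 6 ≤ G.degree v)
    (S : Set V) (x₁ x₂ : V) (hx₁ : x₁ ∈ S) (hx₂ : x₂ ∈ S)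
    (F : (G.induce (Sᶜ : Set V)).ConnectedComponent)
    (v₀ v₁ v₂ v₃ v₄ : V)
    (hsupp : Subtype.val '' F.supp = {v₀, v₁, v₂, v₃, v₄})
    (hcard : ({v₀, v₁, v₂, v₃, v₄} : Set V).ncard = 5)
    (hK5 : ∀ u ∈ ({v₀, v₁, v₂, v₃, v₄} : Set V), ∀ w ∈ ({v₀, v₁, v₂, v₃, v₄} : Set V),
      u ≠ w → G.Adj u w)
    (hnbr : ∀ u ∈ ({v₁, v₂, v₃, v₄} : Set V), G.neighborSet u ∩ S ⊆ {x₁, x₂}) :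
    ∃ f : Fin 7 → V, Function.Injective f ∧
      ∀ i j, K7minusTriangle.Adj i j → G.Adj (f i) (f j) := by
  -- helper : a set of ncard 5 can't fit in 4 elements
  have le4 : ∀ a b c d : V, ({a, b, c, d} : Set V).ncard ≤ 4 := by
    intro a b c d
    have h1 := Set.ncard_insert_le a ({b, c, d} : Set V)
    have h2 := Set.ncard_insert_le b ({c, d} : Set V)
    have h3 := Set.ncard_insert_le c ({d} : Set V)
    have h4 : ({d} : Set V).ncard = 1 := Set.ncard_singleton d
    simp only [Set.insert_eq] at *
    omega
  have key : ∀ (s : Set V) (a b c d : V), s ⊆ {a, b, c, d} → s.ncard = 5 → False := by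
    intro s a b c d hsub h5
    have h := Set.ncard_le_ncard hsub (Set.toFinite _)
    have := le4 a b c d
    omega
  -- pairwise distinctness of the v's
  have h01 : v₀ ≠ v₁ := by
    rintro rfl; exact key _ v₀ v₂ v₃ v₄ (by intro x hx; simp at hx ⊢; tauto) hcard
  have h02 : v₀ ≠ v₂ := by
    rintro rfl; exact key _ v₀ v₁ v₃ v₄ (by intro x hx; simp at hx ⊢; tauto) hcard
  have h03 : v₀ ≠ v₃ := by
    rintro rfl; exact key _ v₀ v₁ v₂ v₄ (by intro x hx; simp at hx ⊢; tauto) hcard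
  have h04 : v₀ ≠ v₄ := by
    rintro rfl; exact key _ v₀ v₁ v₂ v₃ (by intro x hx; simp at hx ⊢; tauto) hcard
  have h12 : v₁ ≠ v₂ := by
    rintro rfl; exact key _ v₀ v₁ v₃ v₄ (by intro x hx; simp at hx ⊢; tauto) hcard
  have h13 : v₁ ≠ v₃ := by
    rintro rfl; exact key _ v₀ v₁ v₂ v₄ (by intro x hx; simp at hx ⊢; tauto) hcard
  have h14 : v₁ ≠ v₄ := by
    rintro rfl; exact key _ v₀ v₁ v₂ v₃ (by intro x hx; simp at hx ⊢; tauto) hcard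
  have h23 : v₂ ≠ v₃ := by
    rintro rfl; exact key _ v₀ v₁ v₂ v₄ (by intro x hx; simp at hx ⊢; tauto) hcard
  have h24 : v₂ ≠ v₄ := by
    rintro rfl; exact key _ v₀ v₁ v₂ v₃ (by intro x hx; simp at hx ⊢; tauto) hcard
  have h34 : v₃ ≠ v₄ := by
    rintro rfl; exact key _ v₀ v₁ v₂ v₃ (by intro x hx; simp at hx ⊢; tauto) hcard
  -- every v is outside S
  have hvS : ∀ u ∈ ({v₀, v₁, v₂, v₃, v₄} : Set V), u ∉ S := by
    intro u hu
    rw [← hsupp] at hu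
    obtain ⟨⟨w, hw⟩, _, rfl⟩ := hu
    exact hw
  -- neighbors outside S stay in the component's support
  have hcomp : ∀ u ∈ ({v₀, v₁, v₂, v₃, v₄} : Set V), ∀ w, w ∉ S → G.Adj u w →
      w ∈ ({v₀, v₁, v₂, v₃, v₄} : Set V) := by
    intro u hu w hw hadj
    rw [← hsupp] at hu ⊢
    obtain ⟨u', hu'F, rfl⟩ := hu
    refine ⟨⟨w, hw⟩, ?_, rfl⟩
    have hadj' : (G.induce (Sᶜ : Set V)).Adj u' ⟨w, hw⟩ := by
      simpa using hadj
    rw [SimpleGraph.ConnectedComponent.mem_supp_iff] at hu'F ⊢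
    rw [← hu'F]
    exact SimpleGraph.ConnectedComponent.eq.mpr hadj'.symm.reachable
  -- neighbor set bound for v₁..v₄
  have hNsub : ∀ u ∈ ({v₁, v₂, v₃, v₄} : Set V),
      G.neighborSet u ⊆ insert x₁ (insert x₂ (({v₀, v₁, v₂, v₃, v₄} : Set V) \ {u})) := by
    intro u hu w hw
    have hu5 : u ∈ ({v₀, v₁, v₂, v₃, v₄} : Set V) := by
      simp at hu ⊢; tauto
    by_cases hwS : w ∈ S
    · have := hnbr u hu ⟨hw, hwS⟩
      simp at this ⊢; tauto
    · have hmem := hcomp u hu5 w hwS hw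
      right; right
      exact ⟨hmem, by simpa using (G.ne_of_adj hw).symm⟩
  have hdeg : ∀ u : V, (G.neighborSet u).ncard = G.degree u := by
    intro u
    rw [Set.ncard_eq_toFinset_card']
    rfl
  have hdiff : (({v₀, v₁, v₂, v₃, v₄} : Set V)).ncard = 5 := hcard
  -- x₁ ≠ x₂
  have hx12 : x₁ ≠ x₂ := by
    rintro rfl
    have hsub := hNsub v₁ (by simp)
    have hd4 : ((({v₀, v₁, v₂, v₃, v₄} : Set V)) \ {v₁}).ncard = 4 := by
      rw [Set.ncard_diff_singleton_of_mem (by simp), hcard]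
    have h1 := Set.ncard_insert_le x₁ ((({v₀, v₁, v₂, v₃, v₄} : Set V)) \ {v₁})
    have hle := Set.ncard_le_ncard (by simpa using hsub :
      G.neighborSet v₁ ⊆ insert x₁ ((({v₀, v₁, v₂, v₃, v₄} : Set V)) \ {v₁}))
      (Set.toFinite _)
    have h6 := hδ v₁
    rw [← hdeg v₁] at h6
    omega
  -- each of v₁..v₄ is adjacent to x₁ and x₂
  have hxadj : ∀ u ∈ ({v₁, v₂, v₃, v₄} : Set V), G.Adj u x₁ ∧ G.Adj u x₂ := by
    intro u hu
    have hu5 : u ∈ ({v₀, v₁, v₂, v₃, v₄} : Set V) := by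
      simp at hu ⊢; tauto
    have hd4 : ((({v₀, v₁, v₂, v₃, v₄} : Set V)) \ {u}).ncard = 4 := by
      rw [Set.ncard_diff_singleton_of_mem hu5, hcard]
    have h1 := Set.ncard_insert_le x₁ (insert x₂ ((({v₀, v₁, v₂, v₃, v₄} : Set V)) \ {u}))
    have h2 := Set.ncard_insert_le x₂ ((({v₀, v₁, v₂, v₃, v₄} : Set V)) \ {u})
    have h6 := hδ u
    rw [← hdeg u] at h6
    have heq := Set.eq_of_subset_of_ncard_le (hNsub u hu) (by omega) (Set.toFinite _)
    constructor
    · have : x₁ ∈ G.neighborSet u := by rw [heq]; simp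
      exact this
    · have : x₂ ∈ G.neighborSet u := by rw [heq]; simp
      exact this
  obtain ⟨ha1, ha1'⟩ := hxadj v₁ (by simp)
  obtain ⟨ha2, ha2'⟩ := hxadj v₂ (by simp)
  obtain ⟨ha3, ha3'⟩ := hxadj v₃ (by simp)
  obtain ⟨ha4, ha4'⟩ := hxadj v₄ (by simp)
  have hx1v : ∀ u ∈ ({v₀, v₁, v₂, v₃, v₄} : Set V), x₁ ≠ u := by
    intro u hu h; exact hvS u hu (h ▸ hx₁)
  have hx2v : ∀ u ∈ ({v₀, v₁, v₂, v₃, v₄} : Set V), x₂ ≠ u := by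
    intro u hu h; exact hvS u hu (h ▸ hx₂)
  have hx10 := hx1v v₀ (by simp)
  have hx11 := hx1v v₁ (by simp)
  have hx12' := hx1v v₂ (by simp)
  have hx13 := hx1v v₃ (by simp)
  have hx14 := hx1v v₄ (by simp)
  have hx20 := hx2v v₀ (by simp)
  have hx21 := hx2v v₁ (by simp)
  have hx22 := hx2v v₂ (by simp)
  have hx23 := hx2v v₃ (by simp)
  have hx24 := hx2v v₄ (by simp)
  have hK : ∀ u ∈ ({v₀, v₁, v₂, v₃, v₄} : Set V), ∀ w ∈ ({v₀, v₁, v₂, v₃, v₄} : Set V),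
      u ≠ w → G.Adj u w := hK5
  refine ⟨fun i => match i with
    | 0 => x₁ | 1 => x₂ | 2 => v₀ | 3 => v₁ | 4 => v₂ | 5 => v₃ | 6 => v₄, ?_, ?_⟩
  · intro i j hij
    fin_cases i <;> fin_cases j <;> simp only [] at hij <;>
      first
        | rfl
        | exact absurd hij (by assumption)
        | exact absurd hij.symm (by assumption)
        | exact absurd hij (Ne.symm (by assumption))
        | exact absurd hij.symm (Ne.symm (by assumption))
  · have a01 : G.Adj v₀ v₁ := hK5 v₀ (by simp) v₁ (by simp) h01
    have a02 : G.Adj v₀ v₂ := hK5 v₀ (by simp) v₂ (by simp) h02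
    have a03 : G.Adj v₀ v₃ := hK5 v₀ (by simp) v₃ (by simp) h03
    have a04 : G.Adj v₀ v₄ := hK5 v₀ (by simp) v₄ (by simp) h04
    have a12 : G.Adj v₁ v₂ := hK5 v₁ (by simp) v₂ (by simp) h12
    have a13 : G.Adj v₁ v₃ := hK5 v₁ (by simp) v₃ (by simp) h13
    have a14 : G.Adj v₁ v₄ := hK5 v₁ (by simp) v₄ (by simp) h14
    have a23 : G.Adj v₂ v₃ := hK5 v₂ (by simp) v₃ (by simp) h23
    have a24 : G.Adj v₂ v₄ := hK5 v₂ (by simp) v₄ (by simp) h24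
    have a34 : G.Adj v₃ v₄ := hK5 v₃ (by simp) v₄ (by simp) h34
    intro i j hadj
    fin_cases i <;> fin_cases j <;>
      first
        | (exfalso; revert hadj; simp [K7minusTriangle]; done)
        | exact ha1.symm | exact ha2.symm | exact ha3.symm | exact ha4.symm
        | exact ha1'.symm | exact ha2'.symm | exact ha3'.symm | exact ha4'.symm
        | exact ha1 | exact ha2 | exact ha3 | exact ha4
        | exact ha1' | exact ha2' | exact ha3' | exact ha4'
        | exact a01 | exact a02 | exact a03 | exact a04
        | exact a12 | exact a13 | exact a14
        | exact a23 | exact a24 | exact a34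
        | exact a01.symm | exact a02.symm | exact a03.symm | exact a04.symm
        | exact a12.symm | exact a13.symm | exact a14.symm
        | exact a23.symm | exact a24.symm | exact a34.symm
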